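/- Let N ≥ 4 be even and let p be the completely randomized design with equal group sizes. For an assignment W with Σ_i W_i = N/2, impute with β = τ̂(W), i.e., set ĉ_i(W) = y_i(W) + (1/2 − W_i)·τ̂(W). Then for every such W and every choice of potential outcomes, ψ(ĉ(W)) = ((N−2)/(N−1))·V̂_Neyman(W). -/

import Mathlib

open Finset

noncomputable section

/-- Expectation under the design. -/
def expct (N : ℕ) (p f : (Fin N → Bool) → ℝ) : ℝ :=
  ∑ w : Fin N → Bool, p w * f w

/-- Average treatment effect. -/
def tauATE (N : ℕ) (Y1 Y0 : Fin N → ℝ) : ℝ :=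
  (1 / (N : ℝ)) * ∑ i, (Y1 i - Y0 i)

/-- Observed outcome of unit `i` under assignment `w`. -/
def yObs (N : ℕ) (Y1 Y0 : Fin N → ℝ) (w : Fin N → Bool) (i : Fin N) : ℝ :=
  if w i then Y1 i else Y0 i

/-- The HT (difference-in-means) estimator when `π_i = 1/2`. -/
def tauDM (N : ℕ) (Y1 Y0 : Fin N → ℝ) (w : Fin N → Bool) : ℝ :=
  (2 / (N : ℝ)) * ((∑ i, if w i then yObs N Y1 Y0 w i else 0)
    - ∑ i, if w i then 0 else yObs N Y1 Y0 w i)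

/-- Design-based variance of `τ̂`. -/
def varDM (N : ℕ) (p : (Fin N → Bool) → ℝ) (Y1 Y0 : Fin N → ℝ) : ℝ :=
  expct N p (fun w => (tauDM N Y1 Y0 w - tauATE N Y1 Y0) ^ 2)

/-- `ψ(x) = Σ_w p_w·((2/N)·(Σ_{w_i=1} x_i − Σ_{w_i=0} x_i))²`. -/
def psiHalf (N : ℕ) (p : (Fin N → Bool) → ℝ) (x : Fin N → ℝ) : ℝ :=
  ∑ w : Fin N → Bool, p w *
    ((2 / (N : ℝ)) * ((∑ i, if w i then x i else 0) - ∑ i, if w i then 0 else x i)) ^ 2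

/-- The treated set `T(w)`. -/
def Tset (N : ℕ) (w : Fin N → Bool) : Finset (Fin N) :=
  univ.filter fun i => w i = true

/-- Completely randomized design with equal group sizes. -/
def crd (N : ℕ) (w : Fin N → Bool) : ℝ :=
  if (Tset N w).card = N / 2 then (1 : ℝ) / (N.choose (N / 2)) else 0

/-- Average observed outcome among treated units. -/
def ybarT (N : ℕ) (Y1 Y0 : Fin N → ℝ) (W : Fin N → Bool) : ℝ :=
  (∑ i ∈ Tset N W, yObs N Y1 Y0 W i) / ((Tset N W).card : ℝ)

/-- Average observed outcome among control units. -/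
def ybarC (N : ℕ) (Y1 Y0 : Fin N → ℝ) (W : Fin N → Bool) : ℝ :=
  (∑ i ∈ (Tset N W)ᶜ, yObs N Y1 Y0 W i) / (((Tset N W)ᶜ.card : ℝ))

/-- Neyman's variance estimator. -/
def VNeyman (N : ℕ) (Y1 Y0 : Fin N → ℝ) (W : Fin N → Bool) : ℝ :=
  (1 / (((N : ℝ) / 2) * ((N : ℝ) / 2 - 1))) *
    ((∑ i ∈ Tset N W, (yObs N Y1 Y0 W i - ybarT N Y1 Y0 W) ^ 2)
      + ∑ i ∈ (Tset N W)ᶜ, (yObs N Y1 Y0 W i - ybarC N Y1 Y0 W) ^ 2)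


variable {α : Type*} [DecidableEq α]

lemma filter_mem_powersetCard (u : Finset α) (x : α) (hx : x ∈ u) (n : ℕ) :
    (u.powersetCard (n+1)).filter (fun s => x ∈ s)
      = ((u.erase x).powersetCard n).image (insert x) := by
  ext s
  simp only [mem_filter, mem_powersetCard, mem_image]
  constructor
  · rintro ⟨⟨hsu, hcard⟩, hxs⟩
    refine ⟨s.erase x, ⟨erase_subset_erase x hsu, ?_⟩, insert_erase hxs⟩
    rw [card_erase_of_mem hxs, hcard]; rfl
  · rintro ⟨t, ⟨htu, hcard⟩, rfl⟩
    have hxt : x ∉ t := fun h => (notMem_erase x u) (htu h)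
    exact ⟨⟨insert_subset_iff.2 ⟨hx, htu.trans (erase_subset x u)⟩,
      by rw [card_insert_of_notMem hxt, hcard]⟩, mem_insert_self _ _⟩

lemma insert_injOn_powersetCard (u : Finset α) (x : α) (n : ℕ) :
    Set.InjOn (insert x) (((u.erase x).powersetCard n : Finset (Finset α)) : Set (Finset α)) := by
  intro s hs t ht h
  simp only [mem_coe, mem_powersetCard] at hs ht
  have hxs : x ∉ s := fun hm => (notMem_erase x u) (hs.1 hm)
  have hxt : x ∉ t := fun hm => (notMem_erase x u) (ht.1 hm)
  rw [← erase_insert hxs, ← erase_insert hxt, h]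

lemma card_filter_mem_powersetCard (u : Finset α) (x : α) (hx : x ∈ u) (n : ℕ) :
    ((u.powersetCard (n+1)).filter (fun s => x ∈ s)).card
      = (u.card - 1).choose n := by
  rw [filter_mem_powersetCard u x hx n,
    card_image_of_injOn (insert_injOn_powersetCard u x n),
    card_powersetCard, card_erase_of_mem hx]

lemma card_filter_pair_mem_powersetCard (u : Finset α) (x y : α) (hx : x ∈ u)
    (hy : y ∈ u) (hxy : x ≠ y) (n : ℕ) :
    ((u.powersetCard (n+2)).filter (fun s => x ∈ s ∧ y ∈ s)).card
      = (u.card - 2).choose n := by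
  have h1 : (u.powersetCard (n+2)).filter (fun s => x ∈ s ∧ y ∈ s)
      = ((u.powersetCard (n+2)).filter (fun s => x ∈ s)).filter (fun s => y ∈ s) := by
    rw [filter_filter]
  rw [h1, filter_mem_powersetCard u x hx (n+1), filter_image]
  have h2 : ((u.erase x).powersetCard (n+1)).filter (fun s => y ∈ insert x s)
      = ((u.erase x).powersetCard (n+1)).filter (fun s => y ∈ s) := by
    apply filter_congr; intro s _; simp [mem_insert, hxy.symm]
  rw [h2, card_image_of_injOn ((insert_injOn_powersetCard u x (n+1)).mono ?_),
    card_filter_mem_powersetCard (u.erase x) y (mem_erase.2 ⟨hxy.symm, hy⟩) n,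
    card_erase_of_mem hx]
  · congr 1
  · intro s hs; simp only [mem_coe, mem_filter, mem_powersetCard] at hs ⊢
    exact ⟨hs.1.1, hs.1.2⟩

lemma sum_ind (u : Finset α) {s : Finset α} (h : s ⊆ u) (f : α → ℝ) :
    ∑ i ∈ s, f i = ∑ i ∈ u, if i ∈ s then f i else 0 := by
  rw [sum_ite_mem, inter_eq_right.2 h]

lemma sum_powersetCard_linear (u : Finset α) (n : ℕ) (f : α → ℝ) :
    ∑ s ∈ u.powersetCard (n+1), ∑ i ∈ s, f i
      = ((u.card - 1).choose n : ℝ) * ∑ i ∈ u, f i := by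
  rw [Finset.sum_congr rfl (fun s hs =>
    sum_ind u (mem_powersetCard.1 hs).1 f), Finset.sum_comm]
  rw [Finset.mul_sum]
  refine Finset.sum_congr rfl (fun i hi => ?_)
  rw [← Finset.sum_filter, Finset.sum_const, card_filter_mem_powersetCard u i hi n,
    nsmul_eq_mul]

lemma sum_powersetCard_sq (u : Finset α) (n : ℕ) (f : α → ℝ) :
    ∑ s ∈ u.powersetCard (n+2), (∑ i ∈ s, f i)^2
      = (((u.card - 1).choose (n+1) : ℝ) - ((u.card - 2).choose n : ℝ)) * ∑ i ∈ u, (f i)^2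
        + ((u.card - 2).choose n : ℝ) * (∑ i ∈ u, f i)^2 := by
  have step1 : ∑ s ∈ u.powersetCard (n+2), (∑ i ∈ s, f i)^2
      = ∑ i ∈ u, ∑ j ∈ u, ∑ s ∈ u.powersetCard (n+2),
          (if i ∈ s ∧ j ∈ s then f i * f j else 0) := by
    have h1 : ∀ i ∈ u, ∑ j ∈ u, ∑ s ∈ u.powersetCard (n+2),
        (if i ∈ s ∧ j ∈ s then f i * f j else 0)
        = ∑ s ∈ u.powersetCard (n+2), ∑ j ∈ u,
            (if i ∈ s ∧ j ∈ s then f i * f j else 0) :=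
      fun i _ => Finset.sum_comm
    rw [Finset.sum_congr rfl h1, Finset.sum_comm]
    refine Finset.sum_congr rfl (fun s hs => ?_)
    rw [sq, sum_ind u (mem_powersetCard.1 hs).1 f, Finset.sum_mul_sum]
    refine Finset.sum_congr rfl (fun i _ => Finset.sum_congr rfl (fun j _ => ?_))
    split_ifs with h1 h2 h3 <;> simp_all
  rw [step1]
  have step2 : ∀ i ∈ u, ∀ j ∈ u,
      ∑ s ∈ u.powersetCard (n+2), (if i ∈ s ∧ j ∈ s then f i * f j else 0)
        = if i = j then ((u.card - 1).choose (n+1) : ℝ) * (f i)^2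
          else ((u.card - 2).choose n : ℝ) * (f i * f j) := by
    intro i hi j hj
    rw [← Finset.sum_filter, Finset.sum_const, nsmul_eq_mul]
    by_cases hij : i = j
    · subst hij
      simp only [and_self, if_pos rfl]
      rw [card_filter_mem_powersetCard u i hi (n+1), sq]
      simp
    · rw [if_neg hij, card_filter_pair_mem_powersetCard u i j hi hj hij n]
  rw [Finset.sum_congr rfl (fun i hi => Finset.sum_congr rfl (fun j hj => step2 i hi j hj))]
  have step3 : ∀ i ∈ u, ∑ j ∈ u, (if i = j then ((u.card - 1).choose (n+1) : ℝ) * (f i)^2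
        else ((u.card - 2).choose n : ℝ) * (f i * f j))
      = ((u.card - 2).choose n : ℝ) * (f i * ∑ j ∈ u, f j)
        + (((u.card - 1).choose (n+1) : ℝ) - ((u.card - 2).choose n : ℝ)) * (f i)^2 := by
    intro i hi
    have h2 : ∀ j ∈ u, (if i = j then ((u.card - 1).choose (n+1) : ℝ) * (f i)^2
          else ((u.card - 2).choose n : ℝ) * (f i * f j))
        = ((u.card - 2).choose n : ℝ) * (f i * f j)
          + (if j = i then (((u.card - 1).choose (n+1) : ℝ)
              - ((u.card - 2).choose n : ℝ)) * (f i)^2 else 0) := by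
      intro j _
      by_cases h : i = j
      · subst h; simp; ring
      · rw [if_neg h, if_neg (Ne.symm h)]; ring
    rw [Finset.sum_congr rfl h2, Finset.sum_add_distrib, Finset.sum_ite_eq' u i
      (fun _ => (((u.card - 1).choose (n+1) : ℝ) - ((u.card - 2).choose n : ℝ)) * (f i)^2),
      if_pos hi, ← Finset.mul_sum, ← Finset.mul_sum]
  rw [Finset.sum_congr rfl step3, Finset.sum_add_distrib, ← Finset.mul_sum, ← Finset.mul_sum,
    ← Finset.sum_mul, ← sq]
  ring


lemma tset_bijective (N : ℕ) : Function.Bijective (Tset N) := by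
  constructor
  · intro w1 w2 h
    funext i
    have h2 := congrArg (fun s => i ∈ s) h
    simp only [Tset, mem_filter, mem_univ, true_and, eq_iff_iff] at h2
    cases hb1 : w1 i <;> cases hb2 : w2 i <;> simp_all
  · intro s
    refine ⟨fun i => decide (i ∈ s), ?_⟩
    ext i; simp [Tset]

set_option maxHeartbeats 1000000 in
lemma psi_crd (N : ℕ) (hN : 4 ≤ N) (hEven : 2 ∣ N) (x : Fin N → ℝ) :
    psiHalf N (crd N) x
      = 4/((N:ℝ)*((N:ℝ)-1)) * ((∑ i, (x i)^2) - (∑ i, x i)^2/(N:ℝ)) := by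
  obtain ⟨k, hk4⟩ : ∃ k, N = 2 * k + 4 := ⟨N / 2 - 2, by omega⟩
  have hN2 : N / 2 = k + 2 := by omega
  have hNs1 : N - 1 = 2 * k + 3 := by omega
  have hNs2 : N - 2 = 2 * k + 2 := by omega
  have hT : True := trivial
  -- abbreviations
  have step1 : psiHalf N (crd N) x
      = ∑ s : Finset (Fin N), (if s.card = k + 2 then (1:ℝ)/(N.choose (k+2)) else 0)
          * ((2/(N:ℝ)) * (2 * ∑ i ∈ s, x i - ∑ i, x i))^2 := by
    rw [psiHalf]
    refine Fintype.sum_bijective (Tset N) (tset_bijective N) _ _ (fun w => ?_)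
    have hA : (∑ i, if w i then x i else 0) = ∑ i ∈ Tset N w, x i := by
      rw [Tset, Finset.sum_filter]
    have hB : (∑ i, if w i then 0 else x i) = (∑ i, x i) - ∑ i ∈ Tset N w, x i := by
      rw [← hA, ← Finset.sum_sub_distrib]
      refine Finset.sum_congr rfl (fun i _ => ?_)
      by_cases h : w i <;> simp [h]
    rw [crd, hA, hB, hN2]
    ring_nf
  rw [step1]
  have hP : (univ : Finset (Finset (Fin N))).filter (fun s => s.card = k + 2)
      = powersetCard (k + 2) (univ : Finset (Fin N)) := by
    rw [powersetCard_eq_filter, powerset_univ]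
  have step2 : ∑ s : Finset (Fin N), (if s.card = k + 2 then (1:ℝ)/(N.choose (k+2)) else 0)
          * ((2/(N:ℝ)) * (2 * ∑ i ∈ s, x i - ∑ i, x i))^2
      = ∑ s ∈ powersetCard (k + 2) (univ : Finset (Fin N)),
          (1/(N.choose (k+2):ℝ)) * ((2/(N:ℝ)) * (2 * ∑ i ∈ s, x i - ∑ i, x i))^2 := by
    rw [← hP, Finset.sum_filter]
    refine Finset.sum_congr rfl (fun s _ => ?_)
    by_cases h : s.card = k + 2 <;> simp [h]
  rw [step2]
  have hcard : (powersetCard (k + 2) (univ : Finset (Fin N))).card = N.choose (k+2) := by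
    rw [card_powersetCard, card_univ, Fintype.card_fin]
  have hcu : (univ : Finset (Fin N)).card = N := by rw [card_univ, Fintype.card_fin]
  -- moment sums
  have hS1 : ∑ s ∈ powersetCard (k + 2) (univ : Finset (Fin N)), ∑ i ∈ s, x i
      = (((2*k+3).choose (k+1) : ℝ)) * ∑ i, x i := by
    have := sum_powersetCard_linear (univ : Finset (Fin N)) (k+1) x
    rwa [hcu, hNs1] at this
  have hS2 : ∑ s ∈ powersetCard (k + 2) (univ : Finset (Fin N)), (∑ i ∈ s, x i)^2
      = (((2*k+3).choose (k+1) : ℝ) - ((2*k+2).choose k : ℝ)) * (∑ i, (x i)^2)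
        + ((2*k+2).choose k : ℝ) * (∑ i, x i)^2 := by
    have := sum_powersetCard_sq (univ : Finset (Fin N)) k x
    rwa [hcu, hNs1, hNs2] at this
  have expand : ∑ s ∈ powersetCard (k + 2) (univ : Finset (Fin N)),
          (1/(N.choose (k+2):ℝ)) * ((2/(N:ℝ)) * (2 * ∑ i ∈ s, x i - ∑ i, x i))^2
      = (1/(N.choose (k+2):ℝ) * (4/(N:ℝ)^2) * 4) *
          (∑ s ∈ powersetCard (k + 2) (univ : Finset (Fin N)), (∑ i ∈ s, x i)^2)
        - (1/(N.choose (k+2):ℝ) * (4/(N:ℝ)^2) * 4 * (∑ i, x i)) *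
          (∑ s ∈ powersetCard (k + 2) (univ : Finset (Fin N)), ∑ i ∈ s, x i)
        + (N.choose (k+2) : ℝ) *
          (1/(N.choose (k+2):ℝ) * (4/(N:ℝ)^2) * (∑ i, x i)^2) := by
    rw [Finset.sum_congr rfl (fun s _ => show
        (1/(N.choose (k+2):ℝ)) * ((2/(N:ℝ)) * (2 * ∑ i ∈ s, x i - ∑ i, x i))^2
        = (1/(N.choose (k+2):ℝ) * (4/(N:ℝ)^2) * 4) * (∑ i ∈ s, x i)^2
          - (1/(N.choose (k+2):ℝ) * (4/(N:ℝ)^2) * 4 * (∑ i, x i)) * (∑ i ∈ s, x i)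
          + 1/(N.choose (k+2):ℝ) * (4/(N:ℝ)^2) * (∑ i, x i)^2 from by ring)]
    rw [Finset.sum_add_distrib, Finset.sum_sub_distrib, ← Finset.mul_sum, ← Finset.mul_sum,
      Finset.sum_const, hcard, nsmul_eq_mul]
  rw [expand, hS1, hS2]
  -- combinatorial identities
  have hCpos : (0:ℝ) < (N.choose (k+2) : ℝ) := by
    exact_mod_cast Nat.choose_pos (show k + 2 ≤ N by omega)
  have hNr : (N:ℝ) = 2*(k:ℝ)+4 := by rw [hk4]; push_cast; ring
  have I1 : (2*k+3+1) * ((2*k+3).choose (k+1)) = (2*k+3+1).choose (k+1+1) * (k+1+1) :=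
    Nat.add_one_mul_choose_eq (2*k+3) (k+1)
  have I2 : (2*k+2+1) * ((2*k+2).choose k) = (2*k+2+1).choose (k+1) * (k+1) :=
    Nat.add_one_mul_choose_eq (2*k+2) k
  have hI1R : (2*(k:ℝ)+4) * ((2*k+3).choose (k+1) : ℝ) = (N.choose (k+2) : ℝ) * ((k:ℝ)+2) := by
    rw [hk4]
    exact_mod_cast I1
  have hI2R : (2*(k:ℝ)+3) * ((2*k+2).choose k : ℝ) = ((2*k+3).choose (k+1) : ℝ) * ((k:ℝ)+1) := by
    exact_mod_cast I2
  have hk2 : ((k:ℝ)+2) ≠ 0 := by positivity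
  have hc1' : ((2*k+3).choose (k+1) : ℝ) = (N.choose (k+2) : ℝ) / 2 := by
    have h2 : ((k:ℝ)+2) * (((2*k+3).choose (k+1) : ℝ) * 2)
        = ((k:ℝ)+2) * (N.choose (k+2) : ℝ) := by linear_combination hI1R
    have h3 := mul_left_cancel₀ hk2 h2
    linarith
  have hc2' : ((2*k+2).choose k : ℝ)
      = (N.choose (k+2) : ℝ) * ((k:ℝ)+1) / (2*(2*(k:ℝ)+3)) := by
    have h3 : (2*(k:ℝ)+3) ≠ 0 := by positivity
    field_simp
    linear_combination 2*hI2R + 2*((k:ℝ)+1)*hc1'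
  rw [hc1', hc2', hNr]
  have h3 : (2*(k:ℝ)+3) ≠ 0 := by positivity
  have h4 : (2*(k:ℝ)+4) ≠ 0 := by positivity
  have h5 : (2*(k:ℝ)+4) - 1 ≠ 0 := by intro h; nlinarith [Nat.cast_nonneg (α := ℝ) k]
  have hC0 : (N.choose (k+2) : ℝ) ≠ 0 := ne_of_gt hCpos
  field_simp
  ring

set_option maxHeartbeats 1000000 in
/-- Proposition 6: under the CRD with equal group sizes, the imputation estimator
with `β = τ̂(W)` satisfies `ψ(ĉ(W)) = ((N−2)/(N−1))·V̂_Neyman(W)`. -/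
theorem imputation_tauhat_equals_scaled_neyman
    (N : ℕ) (hN : 4 ≤ N) (hEven : 2 ∣ N)
    (Y1 Y0 : Fin N → ℝ)
    (W : Fin N → Bool) (hW : (Tset N W).card = N / 2) :
    psiHalf N (crd N)
        (fun i => yObs N Y1 Y0 W i
          + (1 / 2 - (if W i then (1 : ℝ) else 0)) * tauDM N Y1 Y0 W)
      = (((N : ℝ) - 2) / ((N : ℝ) - 1)) * VNeyman N Y1 Y0 W := by
  obtain ⟨k, hk4⟩ : ∃ k, N = 2 * k + 4 := ⟨N / 2 - 2, by omega⟩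
  rw [psi_crd N hN hEven]
  set y : Fin N → ℝ := yObs N Y1 Y0 W with hy
  set τ : ℝ := tauDM N Y1 Y0 W with hτdef
  set T : Finset (Fin N) := Tset N W with hTdef
  set St : ℝ := ∑ i ∈ T, y i with hSt
  set Sc : ℝ := ∑ i ∈ Tᶜ, y i with hSc
  set Qt : ℝ := ∑ i ∈ T, (y i)^2 with hQt
  set Qc : ℝ := ∑ i ∈ Tᶜ, (y i)^2 with hQc
  have hcT : ((T.card : ℝ)) = (k:ℝ)+2 := by
    rw [hW]; rw [hk4]; push_cast [show (2*k+4)/2 = k + 2 by omega]; ring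
  have hcC : (((Tᶜ).card : ℝ)) = (k:ℝ)+2 := by
    rw [card_compl, Fintype.card_fin, hW]
    rw [hk4]; push_cast [show (2*k+4) - (2*k+4)/2 = k + 2 by omega]; ring
  have hmemT : ∀ i ∈ T, W i = true := fun i hi => (mem_filter.1 hi).2
  have hmemC : ∀ i ∈ Tᶜ, W i = false := by
    intro i hi
    have := (mem_compl.1 hi)
    simp only [hTdef, Tset, mem_filter, mem_univ, true_and] at this
    exact Bool.eq_false_iff.2 this
  have hτ : τ = (2/(N:ℝ)) * (St - Sc) := by
    rw [hτdef, tauDM]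
    congr 1
    have h1 : (∑ i, if W i then yObs N Y1 Y0 W i else 0) = St := by
      rw [hSt, hTdef, Tset, Finset.sum_filter]
    have h2 : (∑ i, if W i then 0 else yObs N Y1 Y0 W i) = Sc := by
      rw [hSc, hTdef, Tset, compl_filter, Finset.sum_filter]
      refine Finset.sum_congr rfl (fun i _ => ?_)
      by_cases h : W i <;> simp [h, hy]
    rw [h1, h2]
  have A1 : ∑ i ∈ T, (y i + (1/2 - (if W i then (1:ℝ) else 0)) * τ)
      = St - ((k:ℝ)+2) * (τ/2) := by
    rw [Finset.sum_congr rfl (fun i hi => show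
        y i + (1/2 - (if W i then (1:ℝ) else 0)) * τ = y i - τ/2 by
      rw [hmemT i hi]; simp; ring)]
    rw [Finset.sum_sub_distrib, Finset.sum_const, nsmul_eq_mul, hcT]
  have A2 : ∑ i ∈ Tᶜ, (y i + (1/2 - (if W i then (1:ℝ) else 0)) * τ)
      = Sc + ((k:ℝ)+2) * (τ/2) := by
    rw [Finset.sum_congr rfl (fun i hi => show
        y i + (1/2 - (if W i then (1:ℝ) else 0)) * τ = y i + τ/2 by
      rw [hmemC i hi]; simp; ring)]
    rw [Finset.sum_add_distrib, Finset.sum_const, nsmul_eq_mul, hcC]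
  have B1 : ∑ i ∈ T, (y i + (1/2 - (if W i then (1:ℝ) else 0)) * τ)^2
      = Qt - τ * St + ((k:ℝ)+2) * (τ^2/4) := by
    rw [Finset.sum_congr rfl (fun i hi => show
        (y i + (1/2 - (if W i then (1:ℝ) else 0)) * τ)^2
          = (y i)^2 - τ * y i + τ^2/4 by
      rw [hmemT i hi]; simp; ring)]
    rw [Finset.sum_add_distrib, Finset.sum_sub_distrib, ← Finset.mul_sum,
      Finset.sum_const, nsmul_eq_mul, hcT]
  have B2 : ∑ i ∈ Tᶜ, (y i + (1/2 - (if W i then (1:ℝ) else 0)) * τ)^2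
      = Qc + τ * Sc + ((k:ℝ)+2) * (τ^2/4) := by
    rw [Finset.sum_congr rfl (fun i hi => show
        (y i + (1/2 - (if W i then (1:ℝ) else 0)) * τ)^2
          = (y i)^2 + τ * y i + τ^2/4 by
      rw [hmemC i hi]; simp; ring)]
    rw [Finset.sum_add_distrib, Finset.sum_add_distrib, ← Finset.mul_sum,
      Finset.sum_const, nsmul_eq_mul, hcC]
  have hbT : ybarT N Y1 Y0 W = St / ((k:ℝ)+2) := by
    rw [ybarT, hcT]
  have hbC : ybarC N Y1 Y0 W = Sc / ((k:ℝ)+2) := by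
    rw [ybarC, hcC]
  have SS1 : ∑ i ∈ T, (y i - ybarT N Y1 Y0 W)^2
      = Qt - 2 * (St/((k:ℝ)+2)) * St + ((k:ℝ)+2) * (St/((k:ℝ)+2))^2 := by
    rw [Finset.sum_congr rfl (fun i hi => show
        (y i - ybarT N Y1 Y0 W)^2
          = (y i)^2 - 2 * (St/((k:ℝ)+2)) * y i + (St/((k:ℝ)+2))^2 by
      rw [hbT]; ring)]
    rw [Finset.sum_add_distrib, Finset.sum_sub_distrib, ← Finset.mul_sum,
      Finset.sum_const, nsmul_eq_mul, hcT]
  have SS2 : ∑ i ∈ Tᶜ, (y i - ybarC N Y1 Y0 W)^2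
      = Qc - 2 * (Sc/((k:ℝ)+2)) * Sc + ((k:ℝ)+2) * (Sc/((k:ℝ)+2))^2 := by
    rw [Finset.sum_congr rfl (fun i hi => show
        (y i - ybarC N Y1 Y0 W)^2
          = (y i)^2 - 2 * (Sc/((k:ℝ)+2)) * y i + (Sc/((k:ℝ)+2))^2 by
      rw [hbC]; ring)]
    rw [Finset.sum_add_distrib, Finset.sum_sub_distrib, ← Finset.mul_sum,
      Finset.sum_const, nsmul_eq_mul, hcC]
  rw [VNeyman, SS1, SS2]
  rw [← Finset.sum_add_sum_compl T (fun i => (y i + (1/2 - (if W i then (1:ℝ) else 0)) * τ)^2),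
    ← Finset.sum_add_sum_compl T (fun i => y i + (1/2 - (if W i then (1:ℝ) else 0)) * τ),
    A1, A2, B1, B2, hτ]
  have hNr : (N:ℝ) = 2*(k:ℝ)+4 := by rw [hk4]; push_cast; ring
  rw [hNr]
  have e1 : (2*(k:ℝ)+4) - 1 = 2*(k:ℝ)+3 := by ring
  have e2 : (2*(k:ℝ)+4) - 2 = 2*(k:ℝ)+2 := by ring
  have e3 : (2*(k:ℝ)+4)/2 = (k:ℝ)+2 := by ring
  rw [e1, e2, e3]
  have e4 : ((k:ℝ)+2) - 1 = (k:ℝ)+1 := by ring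
  rw [e4]
  have h1 : ((k:ℝ)+2) ≠ 0 := by positivity
  have h2 : (2*(k:ℝ)+4) ≠ 0 := by positivity
  have h3 : (2*(k:ℝ)+3) ≠ 0 := by positivity
  have h4 : ((k:ℝ)+1) ≠ 0 := by positivity
  field_simp
  ring
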